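/- Let G = (V, E) be a finite simple graph, let G̃ be its subdivision graph with associated function f̃, and let F = {f_1, …, f_k} be unimodal functions on G̃ with Σ_{i=1}^{k} f_i = f̃. Let v ∈ V be a vertex with deg_G(v) ≥ 1 that is not a mode of any function in F. For each edge e of G incident to v, let F^v_e = {f ∈ F | f(m_e) ≥ f(v) and f(v) ≥ f(m_{e'}) for every other edge e' of G incident to v}. Then every function in F belongs to F^v_e for some edge e incident to v, and for every edge e incident to v, Σ_{f ∈ F^v_e} f(v) = 1. -/

import Mathlib

open SimpleGraph

/-- A set of vertices induces a tree in `G`. -/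
def InducesTree {V : Type*} (G : SimpleGraph V) (S : Set V) : Prop :=
  (G.induce S).IsTree

/-- `f` is unimodal on `G`: every positive superlevel set is empty or induces a tree. -/
def UnimodalOn {V : Type*} (G : SimpleGraph V) (f : V → NNReal) : Prop :=
  ∀ c : NNReal, 0 < c → {v | c ≤ f v} = ∅ ∨ InducesTree G {v | c ≤ f v}

/-- The subdivision graph of `G`: one new midpoint vertex on each edge of `G`,
adjacent exactly to the two endpoints of that edge. -/
def subdivGraph {V : Type*} (G : SimpleGraph V) : SimpleGraph (V ⊕ G.edgeSet) where
  Adj x y :=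
    match x, y with
    | Sum.inl v, Sum.inr e => v ∈ (e : Sym2 V)
    | Sum.inr e, Sum.inl v => v ∈ (e : Sym2 V)
    | _, _ => False
  symm := by
    refine ⟨?_⟩
    rintro (v | e) (w | e2) h
    · exact h.elim
    · exact h
    · exact h
    · exact h.elim
  loopless := by
    refine ⟨?_⟩
    rintro (v | e) h
    · exact h.elim
    · exact h.elim

/-- The canonical function on the subdivision graph: the degree on original vertices,
and `1` on midpoint vertices. -/
def ftilde {V : Type*} [Fintype V] (G : SimpleGraph V) [DecidableRel G.Adj] :
    V ⊕ G.edgeSet → NNReal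
  | Sum.inl v => (G.degree v : NNReal)
  | Sum.inr _ => 1

/-- The family `F^v_e`: indices of those components whose value at the midpoint of `e` is
at least the value at `v`, and whose value at `v` is at least the value at the midpoint of
every other edge incident to `v`. -/
def Fve {V : Type*} (G : SimpleGraph V) {k : ℕ} (f : Fin k → (V ⊕ G.edgeSet) → NNReal)
    (v : V) (e : G.edgeSet) : Set (Fin k) :=
  {i | f i (Sum.inl v) ≤ f i (Sum.inr e) ∧
    ∀ e2 : G.edgeSet, v ∈ (e2 : Sym2 V) → e2 ≠ e → f i (Sum.inr e2) ≤ f i (Sum.inl v)}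

/-- If `v` is a vertex of positive degree that is not a mode of any component of a
unimodal decomposition of the canonical function on the subdivision graph, then every
component belongs to `F^v_e` for some edge `e` incident to `v`, and for every edge `e`
incident to `v` the values at `v` of the components in `F^v_e` sum to `1`. -/
theorem modeless_vertex_partition_sum_one
    {V : Type*} [Fintype V] [DecidableEq V] (G : SimpleGraph V) [DecidableRel G.Adj]
    (k : ℕ) (f : Fin k → (V ⊕ G.edgeSet) → NNReal)
    (hf : ∀ i, UnimodalOn (subdivGraph G) (f i))
    (hsum : ∀ x, ∑ i, f i x = ftilde G x)
    (v : V) (hdeg : 1 ≤ G.degree v)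
    (hmode : ∀ i, ¬ ∀ y, f i y ≤ f i (Sum.inl v)) :
    (∀ i : Fin k, ∃ e : G.edgeSet, v ∈ (e : Sym2 V) ∧ i ∈ Fve G f v e) ∧
      ∀ e : G.edgeSet, v ∈ (e : Sym2 V) →
        ∑ᶠ i ∈ Fve G f v e, f i (Sum.inl v) = 1 := by
    classical
  set N : Finset G.edgeSet := Finset.univ.filter (fun e : G.edgeSet => v ∈ (e : Sym2 V)) with hN
  have hmemN : ∀ e : G.edgeSet, e ∈ N ↔ v ∈ (e : Sym2 V) := by
    intro e; simp [hN]
  have hNcard : N.card = G.degree v := by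
    rw [← G.card_incidenceFinset_eq_degree v]
    apply Finset.card_bij (fun (e : G.edgeSet) (_ : e ∈ N) => (e : Sym2 V))
    · intro e he
      rw [SimpleGraph.mem_incidenceFinset]
      exact ⟨e.2, (hmemN e).1 he⟩
    · intro e1 h1 e2 h2 h
      exact Subtype.ext h
    · intro s hs
      rw [SimpleGraph.mem_incidenceFinset] at hs
      exact ⟨⟨s, hs.1⟩, (hmemN _).2 hs.2, rfl⟩
  have hsum_v : ∑ j, f j (Sum.inl v) = (G.degree v : NNReal) := hsum (Sum.inl v)
  have hsum_e : ∀ e : G.edgeSet, ∑ j, f j (Sum.inr e) = 1 := fun e => hsum (Sum.inr e)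
  have hNne : N.Nonempty := Finset.card_pos.mp (by rw [hNcard]; exact hdeg)
  have hmax : ∀ i : Fin k, ∃ e ∈ N, ∀ e' ∈ N, f i (Sum.inr e') ≤ f i (Sum.inr e) := fun i =>
    N.exists_max_image (fun e => f i (Sum.inr e)) hNne
  choose ε hεN hεmax using hmax
  -- Step 1: f i (inl v) ≤ f i (inr (ε i))
  have key1 : ∀ i, f i (Sum.inl v) ≤ f i (Sum.inr (ε i)) := by
    intro i
    rcases eq_or_lt_of_le (zero_le : 0 ≤ f i (Sum.inl v)) with h0 | hpos
    · rw [← h0]; exact zero_le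
    · obtain ⟨e, heN, he⟩ : ∃ e ∈ N, f i (Sum.inl v) ≤ f i (Sum.inr e) := by
        have hS : Sum.inl v ∈ {x | f i (Sum.inl v) ≤ f i x} := Set.mem_setOf_eq ▸ le_refl _
        rcases hf i (f i (Sum.inl v)) hpos with hemp | htree
        · exact absurd (hemp ▸ hS) (Set.notMem_empty _)
        · obtain ⟨y, hy⟩ : ∃ y, f i (Sum.inl v) < f i y := by
            by_contra hc
            push_neg at hc
            exact hmode i hc
          have hyS : y ∈ {x | f i (Sum.inl v) ≤ f i x} := le_of_lt hy
          have hne : (⟨Sum.inl v, hS⟩ : {x | f i (Sum.inl v) ≤ f i x}) ≠ ⟨y, hyS⟩ := by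
            intro h
            rw [Subtype.mk_eq_mk] at h
            rw [← h] at hy
            exact lt_irrefl _ hy
          obtain ⟨p⟩ :=
            htree.isConnected.preconnected ⟨Sum.inl v, hS⟩ ⟨y, hyS⟩
          cases p with
          | nil => exact absurd rfl hne
          | @cons _ w _ hadj p' =>
            obtain ⟨x, hxS⟩ := w
            have hadj' : (subdivGraph G).Adj (Sum.inl v) x := hadj
            cases x with
            | inl u => exact absurd hadj' (by simp [subdivGraph])
            | inr e =>
              have hve : v ∈ (e : Sym2 V) := hadj'
              exact ⟨e, (hmemN e).2 hve, hxS⟩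
      exact le_trans he (hεmax i e heN)
  set T : G.edgeSet → Finset (Fin k) := fun e => Finset.univ.filter (fun j => ε j = e) with hT
  have hBC : ∑ j, f j (Sum.inr (ε j)) = ∑ e ∈ N, ∑ j ∈ T e, f j (Sum.inr e) := by
    rw [← Finset.sum_fiberwise_of_maps_to (fun j _ => hεN j) (fun j => f j (Sum.inr (ε j)))]
    apply Finset.sum_congr rfl
    intro e _
    apply Finset.sum_congr rfl
    intro j hj
    have : ε j = e := (Finset.mem_filter.1 hj).2
    rw [this]
  have hle1 : ∀ e ∈ N, ∑ j ∈ T e, f j (Sum.inr e) ≤ 1 := by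
    intro e _
    calc ∑ j ∈ T e, f j (Sum.inr e) ≤ ∑ j, f j (Sum.inr e) :=
          Finset.sum_le_sum_of_subset (Finset.subset_univ _)
      _ = 1 := hsum_e e
  have hAB : ∑ j, f j (Sum.inl v) ≤ ∑ j, f j (Sum.inr (ε j)) :=
    Finset.sum_le_sum (fun j _ => key1 j)
  have hCle : ∑ e ∈ N, ∑ j ∈ T e, f j (Sum.inr e) ≤ (G.degree v : NNReal) := by
    calc ∑ e ∈ N, ∑ j ∈ T e, f j (Sum.inr e) ≤ ∑ _e ∈ N, (1 : NNReal) :=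
          Finset.sum_le_sum hle1
      _ = (N.card : NNReal) := by simp
      _ = (G.degree v : NNReal) := by rw [hNcard]
  have hABeq : ∑ j, f j (Sum.inl v) = ∑ j, f j (Sum.inr (ε j)) :=
    le_antisymm hAB (by rw [hBC, hsum_v]; exact hCle)
  have key_eq : ∀ j, f j (Sum.inl v) = f j (Sum.inr (ε j)) := by
    have h := (Finset.sum_eq_sum_iff_of_le (fun j _ => key1 j)).1 hABeq
    exact fun j => h j (Finset.mem_univ j)
  have hCeq : ∀ e ∈ N, ∑ j ∈ T e, f j (Sum.inr e) = 1 := by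
    have htot : ∑ e ∈ N, ∑ j ∈ T e, f j (Sum.inr e) = ∑ _e ∈ N, (1 : NNReal) := by
      rw [← hBC, ← hABeq, hsum_v]
      simp [hNcard]
    exact fun e he => (Finset.sum_eq_sum_iff_of_le hle1).1 htot e he
  have hzero : ∀ e ∈ N, ∀ j, ε j ≠ e → f j (Sum.inr e) = 0 := by
    intro e he j hj
    have hsplit :
        ∑ j ∈ T e, f j (Sum.inr e) +
          ∑ j ∈ Finset.univ.filter (fun j => ¬ ε j = e), f j (Sum.inr e) = 1 := by
      rw [Finset.sum_filter_add_sum_filter_not]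
      exact hsum_e e
    rw [hCeq e he] at hsplit
    have hrest : ∑ j ∈ Finset.univ.filter (fun j => ¬ ε j = e), f j (Sum.inr e) = 0 := by
      have := hsplit
      nth_rewrite 2 [← add_zero (1 : NNReal)] at this
      exact add_left_cancel this
    exact Finset.sum_eq_zero_iff.1 hrest j (Finset.mem_filter.2 ⟨Finset.mem_univ _, hj⟩)
  have hmemFve : ∀ j, j ∈ Fve G f v (ε j) := by
    intro j
    refine ⟨le_of_eq (key_eq j), fun e2 hve2 hne => ?_⟩
    rw [hzero e2 ((hmemN e2).2 hve2) j (Ne.symm hne)]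
    exact zero_le
  constructor
  · exact fun i => ⟨ε i, (hmemN (ε i)).1 (hεN i), hmemFve i⟩
  · intro e hve
    have heN : e ∈ N := (hmemN e).2 hve
    have hfin : (Fve G f v e).Finite := Set.toFinite _
    rw [finsum_mem_eq_finite_toFinset_sum _ hfin]
    have hsub : T e ⊆ hfin.toFinset := by
      intro j hj
      rw [Set.Finite.mem_toFinset]
      have hje : ε j = e := (Finset.mem_filter.1 hj).2
      rw [← hje]
      exact hmemFve j
    have hext : ∀ j ∈ hfin.toFinset, j ∉ T e → f j (Sum.inl v) = 0 := by
      intro j hjt hjn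
      have hjF : j ∈ Fve G f v e := (Set.Finite.mem_toFinset hfin).1 hjt
      have hεne : ε j ≠ e := fun h => hjn (Finset.mem_filter.2 ⟨Finset.mem_univ _, h⟩)
      have h0 : f j (Sum.inr e) = 0 := hzero e heN j hεne
      exact le_antisymm (h0 ▸ hjF.1) zero_le
    rw [← Finset.sum_subset hsub hext]
    calc ∑ j ∈ T e, f j (Sum.inl v) = ∑ j ∈ T e, f j (Sum.inr e) := by
          apply Finset.sum_congr rfl
          intro j hj
          have hje : ε j = e := (Finset.mem_filter.1 hj).2
          rw [key_eq j, hje]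
      _ = 1 := hCeq e heN
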